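/- Let Z ≥ 2, let x₂ ≤ 0, and let (Ω, μ) be a probability space with a measurable label map Y : Ω → {1,…,Z}. For any measurable classifier F : Ω → Δ_Z with pointwise loss ℓ(u, c) = L_EL(‖q_c − u‖₁), clean risk R(F) = ∫ ℓ(F(ω), Y(ω)) dμ(ω), and noisy risk R^η(F) = ∫ [(1−η)ℓ(F(ω), Y(ω)) + (η/(Z−1)) Σ_{j ≠ Y(ω)} ℓ(F(ω), j)] dμ(ω), one has the decomposition R^η(F) = (1 − ηZ/(Z−1)) R(F) + (η/(Z−1)) · (3Z − 2 − Z x₂) e^{x₂}. -/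

import Mathlib

open MeasureTheory Real Finset

/-- Negative fraction linear (NFL) loss with parameter `x1`. -/
noncomputable def LNFL (x1 x : ℝ) : ℝ := if x1 ≤ x then x / x1 ^ 2 - 1 / x1 else -(1 / x)

/-- Exponential linear (EL) loss with parameter `x2`. -/
noncomputable def LEL (x2 x : ℝ) : ℝ := if x2 ≤ x then Real.exp x2 * (x + 1 - x2) else Real.exp x

/-- The one-hot vector `q_c` for class `c`. -/
def onehot {Z : ℕ} (c : Fin Z) : Fin Z → ℝ := fun z => if z = c then 1 else 0

/-- The ℓ1 norm on `ℝ^Z`. -/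
noncomputable def l1norm {Z : ℕ} (v : Fin Z → ℝ) : ℝ := ∑ z, |v z|

/-- Membership in the probability simplex `Δ_Z`. -/
def inSimplex {Z : ℕ} (u : Fin Z → ℝ) : Prop := (∀ z, 0 ≤ u z) ∧ ∑ z, u z = 1

lemma simplex_le_one' {Z : ℕ} {u : Fin Z → ℝ} (hu : inSimplex u) (c : Fin Z) : u c ≤ 1 := by
  obtain ⟨h0, h1⟩ := hu
  rw [← h1]
  exact Finset.single_le_sum (fun i _ => h0 i) (Finset.mem_univ c)

lemma l1_onehot' {Z : ℕ} (c : Fin Z) {u : Fin Z → ℝ} (hu : inSimplex u) :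
    l1norm (onehot c - u) = 2 * (1 - u c) := by
  have huc := simplex_le_one' hu c
  obtain ⟨h0, h1⟩ := hu
  have habs : ∀ z : Fin Z, |(onehot c - u) z| = u z + (if z = c then 1 - 2 * u z else 0) := by
    intro z
    simp only [Pi.sub_apply, onehot]
    split
    · rw [abs_of_nonneg]; · subst ‹z = c›; ring
      subst ‹z = c›; linarith
    · rw [abs_of_nonpos (by linarith [h0 z])]; ring
  rw [l1norm, Finset.sum_congr rfl (fun z _ => habs z), Finset.sum_add_distrib, h1,
    Finset.sum_ite_eq' Finset.univ c (fun z => 1 - 2 * u z)]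
  simp; ring

lemma lel_eval' {Z : ℕ} {x2 : ℝ} (hx2 : x2 ≤ 0) (c : Fin Z) {u : Fin Z → ℝ} (hu : inSimplex u) :
    LEL x2 (l1norm (onehot c - u)) = Real.exp x2 * (2 * (1 - u c) + 1 - x2) := by
  rw [l1_onehot' c hu, LEL, if_pos (by nlinarith [simplex_le_one' hu c])]

lemma lel_sum' {Z : ℕ} {x2 : ℝ} (hx2 : x2 ≤ 0) {u : Fin Z → ℝ} (hu : inSimplex u) :
    ∑ c : Fin Z, LEL x2 (l1norm (onehot c - u)) = (3 * (Z : ℝ) - 2 - Z * x2) * Real.exp x2 := by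
  rw [Finset.sum_congr rfl (fun c _ => lel_eval' hx2 c hu), ← Finset.mul_sum]
  have : ∑ c : Fin Z, (2 * (1 - u c) + 1 - x2) = 3 * (Z : ℝ) - 2 - Z * x2 := by
    rw [Finset.sum_sub_distrib, Finset.sum_add_distrib, Finset.sum_const, Finset.sum_const,
       ← Finset.mul_sum, Finset.sum_sub_distrib, Finset.sum_const, hu.2]
    simp [Finset.card_univ]; ring
  rw [this]; ring

/-- Decomposition of the symmetric-noise risk under the EL loss:
`R^η(F) = (1 - ηZ/(Z-1)) R(F) + (η/(Z-1)) · (3Z - 2 - Z x₂) e^{x₂}`. -/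
theorem el_noisy_risk_decomposition {Z : ℕ} (hZ : 2 ≤ Z) {x2 : ℝ} (hx2 : x2 ≤ 0)
    {Ω : Type*} [MeasurableSpace Ω] (μ : Measure Ω) [IsProbabilityMeasure μ]
    (Y : Ω → Fin Z) (hY : Measurable Y) (η : ℝ)
    (F : Ω → Fin Z → ℝ) (hF : Measurable F) (hFS : ∀ ω, inSimplex (F ω)) :
    (∫ ω, ((1 - η) * LEL x2 (l1norm (onehot (Y ω) - F ω))
        + η / ((Z : ℝ) - 1) *
          ∑ j ∈ Finset.univ.filter (· ≠ Y ω), LEL x2 (l1norm (onehot j - F ω))) ∂μ)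
    = (1 - η * Z / ((Z : ℝ) - 1)) * (∫ ω, LEL x2 (l1norm (onehot (Y ω) - F ω)) ∂μ)
      + η / ((Z : ℝ) - 1) * ((3 * (Z : ℝ) - 2 - Z * x2) * Real.exp x2) := by
  have hZ1 : (Z : ℝ) - 1 ≠ 0 := by
    have : (2 : ℝ) ≤ (Z : ℝ) := by exact_mod_cast hZ
    linarith
  set C : ℝ := (3 * (Z : ℝ) - 2 - Z * x2) * Real.exp x2 with hC
  set f : Ω → ℝ := fun ω => LEL x2 (l1norm (onehot (Y ω) - F ω)) with hf
  -- measurability and integrability of f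
  have hm : Measurable fun ω => F ω (Y ω) := by
    have : (fun ω => F ω (Y ω)) = fun ω => ∑ j : Fin Z, if Y ω = j then F ω j else 0 := by
      funext ω; simp [Finset.sum_ite_eq]
    rw [this]
    exact Finset.measurable_sum _ fun j _ =>
      Measurable.ite (hY (measurableSet_singleton j)) ((measurable_pi_apply j).comp hF)
        measurable_const
  have hint : Integrable (fun ω => F ω (Y ω)) μ := by
    apply Integrable.mono' (integrable_const 1) hm.aestronglyMeasurable
    filter_upwards with ω
    rw [Real.norm_eq_abs, abs_of_nonneg ((hFS ω).1 _)]
    exact simplex_le_one' (hFS ω) _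
  have hfg : f = fun ω => Real.exp x2 * (3 - x2) - (2 * Real.exp x2) * F ω (Y ω) := by
    funext ω; show LEL x2 (l1norm (onehot (Y ω) - F ω)) = _; rw [lel_eval' hx2 _ (hFS ω)]; ring
  have hI : Integrable f μ := by
    rw [hfg]; exact (integrable_const _).sub (hint.const_mul _)
  -- pointwise rewrite of the integrand
  have key : ∀ ω, (1 - η) * f ω + η / ((Z : ℝ) - 1) *
      ∑ j ∈ Finset.univ.filter (· ≠ Y ω), LEL x2 (l1norm (onehot j - F ω))
      = (1 - η * Z / ((Z : ℝ) - 1)) * f ω + η / ((Z : ℝ) - 1) * C := by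
    intro ω
    have hsum : ∑ j ∈ Finset.univ.filter (· ≠ Y ω), LEL x2 (l1norm (onehot j - F ω))
        = C - f ω := by
      have := lel_sum' hx2 (hFS ω)
      rw [Finset.filter_ne', Finset.sum_erase_eq_sub (Finset.mem_univ (Y ω)), this, hC, hf]
    rw [hsum]
    field_simp
    ring
  calc (∫ ω, ((1 - η) * f ω + η / ((Z : ℝ) - 1) *
          ∑ j ∈ Finset.univ.filter (· ≠ Y ω), LEL x2 (l1norm (onehot j - F ω))) ∂μ)
      = ∫ ω, ((1 - η * Z / ((Z : ℝ) - 1)) * f ω + η / ((Z : ℝ) - 1) * C) ∂μ :=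
        integral_congr_ae (Filter.Eventually.of_forall key)
    _ = (1 - η * Z / ((Z : ℝ) - 1)) * (∫ ω, f ω ∂μ) + η / ((Z : ℝ) - 1) * C := by
        rw [integral_add (hI.const_mul _) (integrable_const _), integral_const_mul,
          integral_const, probReal_univ]
        simp
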